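/- For a C² vector field s : ℝᵈ → ℝᵈ and any point x, the divergence of s at x equals the limit as κ → 0 of (1/(2κ))·[E_ξ(s(x+κξ)·ξ) - E_ξ(s(x-κξ)·ξ)], where ξ is a standard Gaussian random vector in ℝᵈ. -/

import Mathlib

open MeasureTheory ProbabilityTheory Filter
open scoped RealInnerProductSpace Topology

open Real Set Filter
open scoped NNReal ENNReal

lemma myint_abs_rpow {s : ℝ} (hs : -1 < s) {b : ℝ} (hb : 0 < b) :
    Integrable (fun x : ℝ => |x| ^ s * Real.exp (-b * x ^ 2)) := by
  have h1 : IntegrableOn (fun x : ℝ => x ^ s * Real.exp (-b * x ^ 2)) (Ioi 0) :=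
    integrableOn_rpow_mul_exp_neg_mul_sq hb hs
  have h2 : IntegrableOn (fun x : ℝ => |x| ^ s * Real.exp (-b * x ^ 2)) (Ioi 0) := by
    refine h1.congr_fun (fun x hx => ?_) measurableSet_Ioi
    rw [abs_of_pos hx]
  have h3 : IntegrableOn (fun x : ℝ => |x| ^ s * Real.exp (-b * x ^ 2)) (Iic 0) := by
    rw [← Measure.map_neg_eq_self (volume : Measure ℝ)]
    have m : MeasurableEmbedding fun x : ℝ => -x :=
      (Homeomorph.neg ℝ).isClosedEmbedding.measurableEmbedding
    rw [m.integrableOn_map_iff]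
    simp_rw [Function.comp_def, abs_neg, neg_sq, neg_preimage, neg_Iic, neg_zero]
    exact (integrableOn_Ici_iff_integrableOn_Ioi).mpr h2
  have := h3.union h2
  rwa [Iic_union_Ioi, integrableOn_univ] at this

lemma myint_pow_gauss (k : ℕ) {b : ℝ} (hb : 0 < b) :
    Integrable (fun x : ℝ => x ^ k * Real.exp (-b * x ^ 2)) := by
  refine (myint_abs_rpow (s := (k : ℝ)) (lt_of_lt_of_le neg_one_lt_zero (Nat.cast_nonneg k)) hb).mono' ?_ ?_
  · exact (continuous_pow k).mul (by continuity) |>.aestronglyMeasurable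
  · refine Filter.Eventually.of_forall fun x => ?_
    rw [Real.norm_eq_abs, abs_mul, abs_of_pos (Real.exp_pos _), Real.rpow_natCast, abs_pow]
open scoped NNReal ENNReal

noncomputable def pdf01 : ℝ → ℝ≥0 := fun x => (gaussianPDFReal 0 1 x).toNNReal

lemma gauss_eq_density : gaussianReal 0 1 = (volume : Measure ℝ).withDensity (fun x => (pdf01 x : ℝ≥0∞)) := by
  rw [gaussianReal_of_var_ne_zero 0 one_ne_zero]
  congr 1

lemma pdf01_meas : Measurable pdf01 := (measurable_gaussianPDFReal 0 1).real_toNNReal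

lemma pdf01_coe (x : ℝ) : (pdf01 x : ℝ) = (Real.sqrt (2 * π))⁻¹ * Real.exp (-(2:ℝ)⁻¹ * x ^ 2) := by
  rw [pdf01, Real.coe_toNNReal _ (gaussianPDFReal_nonneg 0 1 x), gaussianPDFReal_def]
  simp only [NNReal.coe_one, mul_one, sub_zero]
  congr 2
  ring

lemma gauss_integral_eq (g : ℝ → ℝ) :
    ∫ x, g x ∂(gaussianReal 0 1)
      = ∫ x, ((Real.sqrt (2 * π))⁻¹ * Real.exp (-(2:ℝ)⁻¹ * x ^ 2)) * g x := by
  rw [gauss_eq_density, integral_withDensity_eq_integral_smul pdf01_meas]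
  congr 1; funext x
  simp only [NNReal.smul_def, smul_eq_mul, pdf01_coe]

lemma gauss_integrable_iff (g : ℝ → ℝ) :
    Integrable g (gaussianReal 0 1)
      ↔ Integrable (fun x => ((Real.sqrt (2 * π))⁻¹ * Real.exp (-(2:ℝ)⁻¹ * x ^ 2)) * g x) := by
  rw [gauss_eq_density, integrable_withDensity_iff_integrable_smul pdf01_meas]
  constructor <;> intro h <;> refine h.congr (Filter.Eventually.of_forall fun x => ?_) <;>
    simp only [NNReal.smul_def, smul_eq_mul, pdf01_coe]

lemma gauss_integrable_pow (k : ℕ) : Integrable (fun x : ℝ => x ^ k) (gaussianReal 0 1) := by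
  rw [gauss_integrable_iff]
  have := ((myint_pow_gauss k (b := 2⁻¹) (by norm_num)).const_mul (Real.sqrt (2 * π))⁻¹)
  refine this.congr (Filter.Eventually.of_forall fun x => ?_)
  ring

lemma odd_integral_zero {f : ℝ → ℝ} (hodd : ∀ x, f (-x) = - f x) : ∫ x, f x = 0 := by
  have m : MeasurableEmbedding fun x : ℝ => -x :=
    (Homeomorph.neg ℝ).isClosedEmbedding.measurableEmbedding
  have h1 : ∫ x, f x = ∫ x, f (-x) := by
    conv_lhs => rw [← Measure.map_neg_eq_self (volume : Measure ℝ), m.integral_map]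
  have h2 : ∫ x, f (-x) = -∫ x, f x := by
    simp_rw [hodd]; exact integral_neg f
  linarith [h1, h2]

lemma gauss_mean_zero : ∫ x, x ∂(gaussianReal 0 1) = 0 := by
  rw [gauss_integral_eq]
  exact odd_integral_zero (fun x => by simp [neg_sq])

lemma integral_sq_exp : ∫ x : ℝ, x ^ 2 * Real.exp (-(2:ℝ)⁻¹ * x ^ 2) = Real.sqrt (2 * π) := by
  set E : ℝ → ℝ := fun x => Real.exp (-(2:ℝ)⁻¹ * x ^ 2) with hE
  have hderiv : ∀ x : ℝ, HasDerivAt (fun x => -(x * E x)) (x ^ 2 * E x - E x) x := by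
    intro x
    have h1 : HasDerivAt (fun x : ℝ => -(2:ℝ)⁻¹ * x ^ 2) (-(2:ℝ)⁻¹ * (2 * x ^ 1)) x :=
      (hasDerivAt_pow 2 x).const_mul _
    have h2 := h1.exp
    have h3 := ((hasDerivAt_id' x).mul h2).neg
    refine h3.congr_deriv ?_
    simp only [hE, id_eq]; ring
  have hint : Integrable (fun x : ℝ => x ^ 2 * E x - E x) := by
    have i2 := myint_pow_gauss 2 (b := (2:ℝ)⁻¹) (by norm_num)
    have i0 := integrable_exp_neg_mul_sq (b := (2:ℝ)⁻¹) (by norm_num)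
    exact i2.sub i0
  have htop : Filter.Tendsto (fun x => -(x * E x)) Filter.atTop (nhds 0) := by
    have h := rpow_mul_exp_neg_mul_sq_isLittleO_exp_neg (b := (2:ℝ)⁻¹) (by norm_num) 1
    have h0 : Filter.Tendsto (fun x : ℝ => Real.exp (-(1/2) * x)) Filter.atTop (nhds 0) :=
      Real.tendsto_exp_atBot.comp <|
        (tendsto_const_mul_atBot_of_neg (by norm_num : (-(1/2):ℝ) < 0)).mpr tendsto_id
    have := h.tendsto_zero_of_tendsto h0
    have : Filter.Tendsto (fun x : ℝ => x * E x) Filter.atTop (nhds 0) := by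
      refine this.congr' ?_
      filter_upwards [Filter.eventually_ge_atTop (0:ℝ)] with x hx
      rw [Real.rpow_one]
    simpa using this.neg
  have hbot : Filter.Tendsto (fun x => -(x * E x)) Filter.atBot (nhds 0) := by
    have h := htop.comp tendsto_neg_atBot_atTop
    have h' : Filter.Tendsto (fun x : ℝ => x * E x) Filter.atBot (nhds 0) := by
      have he : ∀ x : ℝ, ((fun x => -(x * E x)) ∘ Neg.neg) x = x * E x := by
        intro x; simp [Function.comp, hE, neg_sq]
      simpa [funext he] using h
    simpa using h'.neg
  have key := integral_of_hasDerivAt_of_tendsto hderiv hint hbot htop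
  simp only [sub_zero, sub_self] at key
  -- key : ∫ x, (x^2 * E x - E x) = 0
  have i2 := myint_pow_gauss 2 (b := (2:ℝ)⁻¹) (by norm_num)
  have i0 := integrable_exp_neg_mul_sq (b := (2:ℝ)⁻¹) (by norm_num)
  have hsplit : ∫ x : ℝ, (x ^ 2 * E x - E x) = (∫ x : ℝ, x ^ 2 * E x) - ∫ x : ℝ, E x :=
    integral_sub i2 i0
  have hg : ∫ x : ℝ, E x = Real.sqrt (2 * π) := by
    have := integral_gaussian (2:ℝ)⁻¹
    simpa [hE, div_eq_mul_inv, mul_comm] using this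
  rw [hsplit, hg] at key
  simp only [hE] at key ⊢
  linarith

lemma gauss_second_moment : ∫ x, x ^ 2 ∂(gaussianReal 0 1) = 1 := by
  rw [gauss_integral_eq]
  have he : (fun x : ℝ => ((Real.sqrt (2 * π))⁻¹ * Real.exp (-(2:ℝ)⁻¹ * x ^ 2)) * x ^ 2)
      = fun x : ℝ => (Real.sqrt (2 * π))⁻¹ * (x ^ 2 * Real.exp (-(2:ℝ)⁻¹ * x ^ 2)) :=
    funext fun x => by ring
  rw [he, integral_const_mul, integral_sq_exp, inv_mul_cancel₀]
  refine Real.sqrt_ne_zero'.mpr (by positivity)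

section Pi
variable {d : ℕ}

local notation "γ" => gaussianReal 0 1
local notation "piγ" => (Measure.pi fun _ : Fin d => gaussianReal 0 1)

lemma pi_prod_integrable (f : Fin d → ℝ → ℝ) (hf : ∀ k, Integrable (f k) γ) :
    Integrable (fun ξ : Fin d → ℝ => ∏ k, f k (ξ k)) piγ := by
  letI : MeasureSpace ℝ := ⟨gaussianReal 0 1⟩
  haveI : IsProbabilityMeasure (volume : Measure ℝ) :=
    inferInstanceAs (IsProbabilityMeasure (gaussianReal 0 1))
  exact MeasureTheory.Integrable.fintype_prod (f := f) hf

lemma pi_prod_integral (f : Fin d → ℝ → ℝ) :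
    ∫ ξ, ∏ k, f k (ξ k) ∂piγ = ∏ k, ∫ t, f k t ∂γ := by
  letI : MeasureSpace ℝ := ⟨gaussianReal 0 1⟩
  haveI : IsProbabilityMeasure (volume : Measure ℝ) :=
    inferInstanceAs (IsProbabilityMeasure (gaussianReal 0 1))
  exact MeasureTheory.integral_fintype_prod_eq_prod f

lemma prod_eval_eq (i j : Fin d) (ξ : Fin d → ℝ) (g : ℝ → ℝ) :
    ∏ k, ((if k = i then g (ξ k) else 1) * (if k = j then g (ξ k) else 1)) = g (ξ i) * g (ξ j) := by
  rw [Finset.prod_mul_distrib]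
  congr 1 <;> simp

lemma factor_integrable (i j k : Fin d) (n : ℕ) :
    Integrable (fun t : ℝ => (if k = i then t ^ n else 1) * (if k = j then t ^ n else 1)) γ := by
  rcases eq_or_ne k i with hki | hki
  · subst hki
    rcases eq_or_ne k j with hkj | hkj
    · subst hkj
      simp only [if_pos rfl]
      exact (gauss_integrable_pow (n + n)).congr
        (Filter.Eventually.of_forall fun t => by simp [pow_add])
    · simp only [if_pos rfl, if_neg hkj, mul_one]
      exact gauss_integrable_pow n
  · rcases eq_or_ne k j with hkj | hkj
    · subst hkj
      simp only [if_neg hki, if_pos rfl, one_mul]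
      exact gauss_integrable_pow n
    · simp only [if_neg hki, if_neg hkj, mul_one]
      exact integrable_const 1

lemma pi_integrable_mul (i j : Fin d) (n : ℕ) :
    Integrable (fun ξ : Fin d → ℝ => (ξ i) ^ n * (ξ j) ^ n) piγ := by
  have := pi_prod_integrable
    (fun k => fun t : ℝ => (if k = i then t ^ n else 1) * (if k = j then t ^ n else 1))
    (fun k => factor_integrable i j k n)
  refine this.congr (Filter.Eventually.of_forall fun ξ => ?_)
  exact prod_eval_eq i j ξ (fun t => t ^ n)

lemma pi_second_moment (i j : Fin d) :
    ∫ ξ, ξ i * ξ j ∂piγ = if i = j then 1 else 0 := by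
  have h1 : (fun ξ : Fin d → ℝ => ξ i * ξ j)
      = fun ξ => ∏ k, ((if k = i then ξ k else 1) * (if k = j then ξ k else 1)) := by
    funext ξ; exact (prod_eval_eq i j ξ id).symm
  have h2 : (∫ ξ, (∏ k, ((if k = i then ξ k else 1) * (if k = j then ξ k else 1))) ∂piγ)
      = ∏ k, ∫ t, ((if k = i then t else 1) * (if k = j then t else 1)) ∂γ :=
    pi_prod_integral (fun k => fun t : ℝ => (if k = i then t else 1) * (if k = j then t else 1))
  rw [h1, h2]
  by_cases hij : i = j
  · subst hij
    rw [if_pos rfl]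
    refine Finset.prod_eq_one fun l _ => ?_
    rcases eq_or_ne l i with hl | hl
    · subst hl
      have e : (fun t : ℝ => (if l = l then t else 1) * (if l = l then t else 1))
          = fun t : ℝ => t ^ 2 := by funext t; simp [sq]
      rw [e]; exact gauss_second_moment
    · have e : (fun t : ℝ => (if l = i then t else 1) * (if l = i then t else 1))
          = fun _ : ℝ => (1:ℝ) := by funext t; simp [hl]
      rw [e]; simp
  · rw [if_neg hij]
    refine Finset.prod_eq_zero (Finset.mem_univ i) ?_
    have e : (fun t : ℝ => (if i = i then t else 1) * (if i = j then t else 1))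
        = fun t : ℝ => t := by funext t; simp [hij]
    rw [e]; exact gauss_mean_zero

lemma pi_D_integrable :
    Integrable (fun ξ : Fin d → ℝ => 1 + ∑ i, ∑ j, (ξ i) ^ 2 * (ξ j) ^ 2) piγ := by
  have : IsProbabilityMeasure piγ := by infer_instance
  refine (integrable_const 1).add ?_
  refine integrable_finset_sum _ fun i _ => integrable_finset_sum _ fun j _ => ?_
  exact pi_integrable_mul i j 2

end Pi

variable {d : ℕ}

lemma fderiv_lip {s : EuclideanSpace ℝ (Fin d) → EuclideanSpace ℝ (Fin d)}
    (hs : ContDiff ℝ 2 s) {M : ℝ} (hM : ∀ x, ‖iteratedFDeriv ℝ 2 s x‖ ≤ M)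
    (a b : EuclideanSpace ℝ (Fin d)) :
    ‖fderiv ℝ s a - fderiv ℝ s b‖ ≤ M * ‖a - b‖ := by
  have h1 : ContDiff ℝ 1 (fderiv ℝ s) := by
    have : ContDiff ℝ (1+1) s := by norm_num at hs ⊢; exact hs
    exact (contDiff_succ_iff_fderiv.mp this).2.2
  refine Convex.norm_image_sub_le_of_norm_hasFDerivWithin_le
    (f := fderiv ℝ s) (f' := fun z => fderiv ℝ (fderiv ℝ s) z) (fun z _ => ?_) (fun z _ => ?_)
    convex_univ (Set.mem_univ b) (Set.mem_univ a)
  · exact ((h1.differentiable one_ne_zero) z).hasFDerivAt.hasFDerivWithinAt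
  · calc ‖fderiv ℝ (fderiv ℝ s) z‖
        = ‖iteratedFDeriv ℝ 0 (fderiv ℝ (fderiv ℝ s)) z‖ := (norm_iteratedFDeriv_zero (f := fderiv ℝ (fderiv ℝ s)) (x := z)).symm
      _ = ‖iteratedFDeriv ℝ 1 (fderiv ℝ s) z‖ := norm_iteratedFDeriv_fderiv
      _ = ‖iteratedFDeriv ℝ 2 s z‖ := norm_iteratedFDeriv_fderiv
      _ ≤ M := hM z

lemma taylor_bound {s : EuclideanSpace ℝ (Fin d) → EuclideanSpace ℝ (Fin d)}
    (hs : ContDiff ℝ 2 s) {M : ℝ} (hM : ∀ x, ‖iteratedFDeriv ℝ 2 s x‖ ≤ M)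
    (x y : EuclideanSpace ℝ (Fin d)) :
    ‖s y - s x - fderiv ℝ s x (y - x)‖ ≤ M * ‖y - x‖ ^ 2 := by
  set A := fderiv ℝ s x with hA
  have hdiff : Differentiable ℝ s := hs.differentiable (by norm_num)
  set F : EuclideanSpace ℝ (Fin d) → EuclideanSpace ℝ (Fin d) := fun z => s z - A z with hF
  have key : ‖F y - F x‖ ≤ (M * ‖y - x‖) * ‖y - x‖ := by
    refine Convex.norm_image_sub_le_of_norm_hasFDerivWithin_le
      (f := F) (f' := fun z => fderiv ℝ s z - A) (fun z _ => ?_) (fun z hz => ?_)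
      (convex_closedBall x ‖y - x‖) (Metric.mem_closedBall_self (norm_nonneg _)) ?_
    · exact ((hdiff z).hasFDerivAt.sub (A.hasFDerivAt)).hasFDerivWithinAt
    · calc ‖fderiv ℝ s z - A‖ ≤ M * ‖z - x‖ := fderiv_lip hs hM z x
        _ ≤ M * ‖y - x‖ := by
            have hM0 : 0 ≤ M := le_trans (norm_nonneg _) (hM x)
            have : ‖z - x‖ ≤ ‖y - x‖ := by
              rw [← dist_eq_norm, ← dist_eq_norm]; exact Metric.mem_closedBall.mp hz
            exact mul_le_mul_of_nonneg_left this hM0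
    · rw [Metric.mem_closedBall, dist_eq_norm]
  have hFeq : F y - F x = s y - s x - A (y - x) := by
    simp only [hF, map_sub]
    abel
  rw [hFeq] at key
  calc ‖s y - s x - A (y - x)‖ ≤ M * ‖y - x‖ * ‖y - x‖ := key
    _ = M * ‖y - x‖ ^ 2 := by ring

/-- Divergence of a vector field on Euclidean space. -/
noncomputable def divergence {d : ℕ}
    (w : EuclideanSpace ℝ (Fin d) → EuclideanSpace ℝ (Fin d))
    (x : EuclideanSpace ℝ (Fin d)) : ℝ :=
  ∑ i, fderiv ℝ w x (EuclideanSpace.single i 1) i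

/-- For a C² vector field `s` with bounded second derivatives, the divergence at `x` is the
limit as `κ → 0⁺` of `(1/(2κ))·[E_ξ ⟪s(x+κξ), ξ⟫ - E_ξ ⟪s(x-κξ), ξ⟫]` where
`ξ ∼ N(0, I_d)` is a standard Gaussian vector. -/
theorem stmt_3 {d : ℕ}
    (s : EuclideanSpace ℝ (Fin d) → EuclideanSpace ℝ (Fin d))
    (hs : ContDiff ℝ 2 s)
    (hbdd : ∃ M : ℝ, ∀ x, ‖iteratedFDeriv ℝ 2 s x‖ ≤ M)
    (μ : Measure (EuclideanSpace ℝ (Fin d)))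
    (hμ : μ = (Measure.pi fun _ : Fin d => gaussianReal 0 1 :
      Measure (∀ _ : Fin d, ℝ)).map (MeasurableEquiv.toLp 2 (Fin d → ℝ)))
    (x : EuclideanSpace ℝ (Fin d)) :
    Tendsto
      (fun κ : ℝ => (1 / (2 * κ)) *
        ((∫ ξ, ⟪s (x + κ • ξ), ξ⟫ ∂μ) - ∫ ξ, ⟪s (x - κ • ξ), ξ⟫ ∂μ))
      (𝓝[>] 0) (𝓝 (divergence s x)) := by
  obtain ⟨M, hM⟩ := hbdd
  have M0 : 0 ≤ M := le_trans (norm_nonneg _) (hM x)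
  haveI hprob : IsProbabilityMeasure μ := by
    rw [hμ]
    exact Measure.isProbabilityMeasure_map (MeasurableEquiv.toLp 2 (Fin d → ℝ)).measurable.aemeasurable
  have hmom : ∀ i j : Fin d, ∫ ξ, ξ i * ξ j ∂μ = if i = j then 1 else 0 := by
    intro i j; rw [hμ, (MeasurableEquiv.toLp 2 (Fin d → ℝ)).measurableEmbedding.integral_map]; exact pi_second_moment i j
  have hmul_int : ∀ (i j : Fin d) (n : ℕ),
      Integrable (fun ξ : EuclideanSpace ℝ (Fin d) => (ξ i) ^ n * (ξ j) ^ n) μ := by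
    intro i j n; rw [hμ, (MeasurableEquiv.toLp 2 (Fin d → ℝ)).measurableEmbedding.integrable_map_iff]; exact pi_integrable_mul i j n
  have hD_int : Integrable
      (fun ξ : EuclideanSpace ℝ (Fin d) => 1 + ∑ i, ∑ j, (ξ i) ^ 2 * (ξ j) ^ 2) μ := by
    rw [hμ, (MeasurableEquiv.toLp 2 (Fin d → ℝ)).measurableEmbedding.integrable_map_iff]; exact pi_D_integrable
  have hDval : ∀ ξ : EuclideanSpace ℝ (Fin d),
      1 + ∑ i, ∑ j, (ξ i) ^ 2 * (ξ j) ^ 2 = 1 + ‖ξ‖ ^ 4 := by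
    intro ξ
    have h2 : ‖ξ‖ ^ 2 = ∑ i, (ξ i) ^ 2 := by
      rw [EuclideanSpace.norm_eq, sq_sqrt (by positivity)]
      simp [sq_abs]
    have h4 : ‖ξ‖ ^ 4 = ∑ i, ∑ j, (ξ i) ^ 2 * (ξ j) ^ 2 := by
      calc ‖ξ‖ ^ 4 = (‖ξ‖ ^ 2) * (‖ξ‖ ^ 2) := by ring
        _ = ∑ i, ∑ j, (ξ i) ^ 2 * (ξ j) ^ 2 := by rw [h2, Finset.sum_mul_sum]
    rw [h4]
  have hDk : ∀ (k : ℕ), k ≤ 4 → ∀ ξ : EuclideanSpace ℝ (Fin d),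
      ‖ξ‖ ^ k ≤ 1 + ∑ i, ∑ j, (ξ i) ^ 2 * (ξ j) ^ 2 := by
    intro k hk ξ
    rw [hDval ξ]
    rcases le_or_gt ‖ξ‖ 1 with h1 | h1
    · have : ‖ξ‖ ^ k ≤ 1 := pow_le_one₀ (norm_nonneg _) h1
      have h40 : (0:ℝ) ≤ ‖ξ‖ ^ 4 := by positivity
      linarith
    · have : ‖ξ‖ ^ k ≤ ‖ξ‖ ^ 4 := pow_le_pow_right₀ h1.le hk
      linarith
  have hnk : ∀ k : ℕ, k ≤ 4 →
      Integrable (fun ξ : EuclideanSpace ℝ (Fin d) => ‖ξ‖ ^ k) μ := by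
    intro k hk
    refine hD_int.mono' ((continuous_norm.pow k).aestronglyMeasurable) ?_
    refine Filter.Eventually.of_forall fun ξ => ?_
    rw [Real.norm_eq_abs, abs_of_nonneg (by positivity)]
    exact hDk k hk ξ
  set A := fderiv ℝ s x with hA
  have hq_cont : Continuous (fun ξ : EuclideanSpace ℝ (Fin d) => ⟪A ξ, ξ⟫) :=
    Continuous.inner A.continuous continuous_id
  have hq_int : Integrable (fun ξ : EuclideanSpace ℝ (Fin d) => ⟪A ξ, ξ⟫) μ := by
    refine ((hnk 2 (by norm_num)).const_mul ‖A‖).mono' hq_cont.aestronglyMeasurable ?_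
    refine Filter.Eventually.of_forall fun ξ => ?_
    rw [Real.norm_eq_abs]
    calc |⟪A ξ, ξ⟫| ≤ ‖A ξ‖ * ‖ξ‖ := abs_real_inner_le_norm _ _
      _ ≤ (‖A‖ * ‖ξ‖) * ‖ξ‖ := mul_le_mul_of_nonneg_right (A.le_opNorm ξ) (norm_nonneg _)
      _ = ‖A‖ * ‖ξ‖ ^ 2 := by ring
  set L := ∫ ξ, ⟪A ξ, ξ⟫ ∂μ with hLdef
  have hLval : L = divergence s x := by
    have hexp : (fun ξ : EuclideanSpace ℝ (Fin d) => ⟪A ξ, ξ⟫)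
        = fun ξ => ∑ i, ∑ j, (A (EuclideanSpace.single j 1)) i * (ξ i * ξ j) := by
      funext ξ
      rw [show ⟪A ξ, ξ⟫ = ∑ i, (A ξ) i * ξ i by
        simp [PiLp.inner_apply, RCLike.inner_apply, conj_trivial, mul_comm]]
      refine Finset.sum_congr rfl fun i _ => ?_
      have hAxi : (A ξ) i = ∑ j, ξ j * A (EuclideanSpace.single j 1) i := by
        conv_lhs => rw [show ξ = ∑ j, ξ j • EuclideanSpace.single j (1:ℝ) by
          ext r; rw [WithLp.ofLp_sum]; simp [EuclideanSpace.single_apply, Pi.single_apply]]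
        rw [map_sum, WithLp.ofLp_sum]
        simp
      rw [hAxi, Finset.sum_mul]
      exact Finset.sum_congr rfl fun j _ => by ring
    have int1 : ∀ i j : Fin d, Integrable
        (fun ξ : EuclideanSpace ℝ (Fin d) => A (EuclideanSpace.single j 1) i * (ξ i * ξ j)) μ := by
      intro i j
      refine ((hmul_int i j 1).congr (Filter.Eventually.of_forall fun ξ => by simp)).const_mul _
    rw [hLdef, hexp]
    rw [integral_finset_sum _ fun i _ => integrable_finset_sum _ fun j _ => int1 i j]
    have : ∀ i : Fin d, ∫ ξ, (∑ j, A (EuclideanSpace.single j 1) i * (ξ i * ξ j)) ∂μ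
        = ∑ j, A (EuclideanSpace.single j 1) i * (if i = j then (1:ℝ) else 0) := by
      intro i
      rw [integral_finset_sum _ fun j _ => int1 i j]
      refine Finset.sum_congr rfl fun j _ => ?_
      rw [integral_const_mul, hmom i j]
    rw [Finset.sum_congr rfl fun i _ => this i]
    rw [divergence]
    refine Finset.sum_congr rfl fun i _ => ?_
    simp [hA]
  set C3 := ∫ ξ, ‖ξ‖ ^ 3 ∂μ with hC3
  have key : ∀ κ : ℝ, 0 < κ →
      |1 / (2 * κ) * ((∫ ξ, ⟪s (x + κ • ξ), ξ⟫ ∂μ) - ∫ ξ, ⟪s (x - κ • ξ), ξ⟫ ∂μ) - L|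
        ≤ κ * (M * C3) := by
    intro κ hκ
    set rp : EuclideanSpace ℝ (Fin d) → ℝ :=
      fun ξ => ⟪s (x + κ • ξ) - s x - A (κ • ξ), ξ⟫ with hrp
    set rm : EuclideanSpace ℝ (Fin d) → ℝ :=
      fun ξ => ⟪s (x - κ • ξ) - s x - A (-(κ • ξ)), ξ⟫ with hrm
    have hrpb : ∀ ξ, |rp ξ| ≤ M * κ ^ 2 * ‖ξ‖ ^ 3 := by
      intro ξ
      have ht := taylor_bound hs hM x (x + κ • ξ)
      rw [add_sub_cancel_left] at ht
      calc |rp ξ| ≤ ‖s (x + κ • ξ) - s x - A (κ • ξ)‖ * ‖ξ‖ := abs_real_inner_le_norm _ _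
        _ ≤ (M * ‖κ • ξ‖ ^ 2) * ‖ξ‖ := mul_le_mul_of_nonneg_right ht (norm_nonneg _)
        _ = M * κ ^ 2 * ‖ξ‖ ^ 3 := by
            rw [norm_smul, Real.norm_eq_abs, mul_pow, sq_abs]; ring
    have hrmb : ∀ ξ, |rm ξ| ≤ M * κ ^ 2 * ‖ξ‖ ^ 3 := by
      intro ξ
      have ht := taylor_bound hs hM x (x - κ • ξ)
      rw [sub_sub_cancel_left] at ht
      calc |rm ξ| ≤ ‖s (x - κ • ξ) - s x - A (-(κ • ξ))‖ * ‖ξ‖ := abs_real_inner_le_norm _ _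
        _ ≤ (M * ‖-(κ • ξ)‖ ^ 2) * ‖ξ‖ := mul_le_mul_of_nonneg_right ht (norm_nonneg _)
        _ = M * κ ^ 2 * ‖ξ‖ ^ 3 := by
            rw [norm_neg, norm_smul, Real.norm_eq_abs, mul_pow, sq_abs]; ring
    have hrp_cont : Continuous rp := by
      refine Continuous.inner ?_ continuous_id
      exact ((hs.continuous.comp (continuous_const.add (continuous_const_smul κ))).sub
        continuous_const).sub (A.continuous.comp (continuous_const_smul κ))
    have hrm_cont : Continuous rm := by
      refine Continuous.inner ?_ continuous_id
      exact ((hs.continuous.comp (continuous_const.sub (continuous_const_smul κ))).sub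
        continuous_const).sub (A.continuous.comp ((continuous_const_smul κ).neg))
    have hrp_int : Integrable rp μ := by
      refine ((hnk 3 (by norm_num)).const_mul (M * κ ^ 2)).mono'
        hrp_cont.aestronglyMeasurable ?_
      exact Filter.Eventually.of_forall fun ξ => by rw [Real.norm_eq_abs]; exact hrpb ξ
    have hrm_int : Integrable rm μ := by
      refine ((hnk 3 (by norm_num)).const_mul (M * κ ^ 2)).mono'
        hrm_cont.aestronglyMeasurable ?_
      exact Filter.Eventually.of_forall fun ξ => by rw [Real.norm_eq_abs]; exact hrmb ξ
    have hB_int : Integrable (fun ξ : EuclideanSpace ℝ (Fin d) => ⟪s x, ξ⟫) μ := by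
      refine ((hnk 1 (by norm_num)).const_mul ‖s x‖).mono'
        (Continuous.inner continuous_const continuous_id).aestronglyMeasurable ?_
      refine Filter.Eventually.of_forall fun ξ => ?_
      rw [Real.norm_eq_abs]
      simpa [pow_one] using abs_real_inner_le_norm (s x) ξ
    have hdec_p : ∀ ξ : EuclideanSpace ℝ (Fin d),
        ⟪s (x + κ • ξ), ξ⟫ = rp ξ + (⟪s x, ξ⟫ + κ * ⟪A ξ, ξ⟫) := by
      intro ξ
      simp only [hrp]
      rw [inner_sub_left, inner_sub_left, _root_.map_smul, real_inner_smul_left]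
      ring
    have hdec_m : ∀ ξ : EuclideanSpace ℝ (Fin d),
        ⟪s (x - κ • ξ), ξ⟫ = rm ξ + (⟪s x, ξ⟫ - κ * ⟪A ξ, ξ⟫) := by
      intro ξ
      simp only [hrm]
      rw [inner_sub_left, inner_sub_left, _root_.map_neg, _root_.map_smul, inner_neg_left,
        real_inner_smul_left]
      ring
    have hq_int' : Integrable (fun ξ : EuclideanSpace ℝ (Fin d) => κ * ⟪A ξ, ξ⟫) μ :=
      hq_int.const_mul κ
    have hBq_p : Integrable (fun ξ : EuclideanSpace ℝ (Fin d) => ⟪s x, ξ⟫ + κ * ⟪A ξ, ξ⟫) μ :=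
      hB_int.add hq_int'
    have hBq_m : Integrable (fun ξ : EuclideanSpace ℝ (Fin d) => ⟪s x, ξ⟫ - κ * ⟪A ξ, ξ⟫) μ :=
      hB_int.sub hq_int'
    have hintp : (∫ ξ, ⟪s (x + κ • ξ), ξ⟫ ∂μ)
        = (∫ ξ, rp ξ ∂μ) + ((∫ ξ, ⟪s x, ξ⟫ ∂μ) + κ * L) := by
      rw [integral_congr_ae (Filter.Eventually.of_forall hdec_p)]
      rw [integral_add hrp_int hBq_p, integral_add hB_int hq_int', integral_const_mul, hLdef]
    have hintm : (∫ ξ, ⟪s (x - κ • ξ), ξ⟫ ∂μ)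
        = (∫ ξ, rm ξ ∂μ) + ((∫ ξ, ⟪s x, ξ⟫ ∂μ) - κ * L) := by
      rw [integral_congr_ae (Filter.Eventually.of_forall hdec_m)]
      rw [integral_add hrm_int hBq_m, integral_sub hB_int hq_int', integral_const_mul, hLdef]
    have hrpI : |∫ ξ, rp ξ ∂μ| ≤ M * κ ^ 2 * C3 := by
      calc |∫ ξ, rp ξ ∂μ| ≤ ∫ ξ, |rp ξ| ∂μ := by
            simpa [Real.norm_eq_abs] using norm_integral_le_integral_norm (μ := μ) rp
        _ ≤ ∫ ξ, M * κ ^ 2 * ‖ξ‖ ^ 3 ∂μ := by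
            refine integral_mono_of_nonneg (Filter.Eventually.of_forall fun ξ => abs_nonneg _)
              ((hnk 3 (by norm_num)).const_mul (M * κ ^ 2))
              (Filter.Eventually.of_forall fun ξ => hrpb ξ)
        _ = M * κ ^ 2 * C3 := by rw [integral_const_mul, hC3]
    have hrmI : |∫ ξ, rm ξ ∂μ| ≤ M * κ ^ 2 * C3 := by
      calc |∫ ξ, rm ξ ∂μ| ≤ ∫ ξ, |rm ξ| ∂μ := by
            simpa [Real.norm_eq_abs] using norm_integral_le_integral_norm (μ := μ) rm
        _ ≤ ∫ ξ, M * κ ^ 2 * ‖ξ‖ ^ 3 ∂μ := by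
            refine integral_mono_of_nonneg (Filter.Eventually.of_forall fun ξ => abs_nonneg _)
              ((hnk 3 (by norm_num)).const_mul (M * κ ^ 2))
              (Filter.Eventually.of_forall fun ξ => hrmb ξ)
        _ = M * κ ^ 2 * C3 := by rw [integral_const_mul, hC3]
    rw [hintp, hintm]
    have hκ0 : (2 * κ) ≠ 0 := by positivity
    have harith : 1 / (2 * κ) * (((∫ ξ, rp ξ ∂μ) + ((∫ ξ, ⟪s x, ξ⟫ ∂μ) + κ * L))
          - ((∫ ξ, rm ξ ∂μ) + ((∫ ξ, ⟪s x, ξ⟫ ∂μ) - κ * L))) - L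
        = 1 / (2 * κ) * ((∫ ξ, rp ξ ∂μ) - (∫ ξ, rm ξ ∂μ)) := by
      field_simp
      ring
    rw [harith]
    calc |1 / (2 * κ) * ((∫ ξ, rp ξ ∂μ) - (∫ ξ, rm ξ ∂μ))|
        = (1 / (2 * κ)) * |(∫ ξ, rp ξ ∂μ) - (∫ ξ, rm ξ ∂μ)| := by
          rw [abs_mul, abs_of_pos (by positivity)]
      _ ≤ (1 / (2 * κ)) * (M * κ ^ 2 * C3 + M * κ ^ 2 * C3) := by
          refine mul_le_mul_of_nonneg_left ?_ (by positivity)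
          calc |(∫ ξ, rp ξ ∂μ) - (∫ ξ, rm ξ ∂μ)| ≤ |∫ ξ, rp ξ ∂μ| + |∫ ξ, rm ξ ∂μ| := by
                rw [sub_eq_add_neg]
                refine (abs_add_le _ _).trans ?_
                rw [abs_neg]
            _ ≤ M * κ ^ 2 * C3 + M * κ ^ 2 * C3 := add_le_add hrpI hrmI
      _ = κ * (M * C3) := by field_simp; ring
  rw [show divergence s x = L from hLval.symm]
  refine tendsto_iff_dist_tendsto_zero.mpr ?_
  have h0 : Filter.Tendsto (fun κ : ℝ => κ * (M * C3)) (𝓝[>] 0) (𝓝 0) := by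
    have h1 : Filter.Tendsto (fun κ : ℝ => κ * (M * C3)) (𝓝 0) (𝓝 (0 * (M * C3))) :=
      (Filter.tendsto_id (x := 𝓝 (0:ℝ))).mul_const (M * C3)
    rw [zero_mul] at h1
    exact h1.mono_left nhdsWithin_le_nhds
  refine squeeze_zero' ?_ ?_ h0
  · exact Filter.Eventually.of_forall fun κ => dist_nonneg
  · filter_upwards [self_mem_nhdsWithin] with κ hκ
    rw [Real.dist_eq]
    exact key κ hκ
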